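/- If a finite-state strategy σ' for Player O implemented by a transducer with n states realizes c(φ) (which in particular requires infinitely many changepoints of p in every outcome), then every outcome consistent with σ' is (n+1)-bounded, i.e., every block of the p-coloring has length at most n+1. -/

import Mathlib

namespace PLDLPaper

/-- Propositional formulas over atomic propositions `P`. -/
inductive PropF (P : Type) where
  | tru : PropF P
  | fls : PropF P
  | atom : P → PropF P
  | natom : P → PropF P
  | conj : PropF P → PropF P → PropF P
  | disj : PropF P → PropF P → PropF P

def PropF.eval {P : Type} (A : P → Prop) : PropF P → Prop
  | .tru => True
  | .fls => False
  | .atom p => A p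
  | .natom p => ¬ A p
  | .conj φ ψ => φ.eval A ∧ ψ.eval A
  | .disj φ ψ => φ.eval A ∨ ψ.eval A

mutual
/-- PLDL formulas (in negation normal form) over atomic propositions `P`
and variables `V`, extended with the fresh coloring proposition `p`
(`colp`/`colnp`) and the changepoint-bounded operators of LDL_cp. -/
inductive Frm (P V : Type) where
  | pos : P → Frm P V
  | neg : P → Frm P V
  | colp : Frm P V
  | colnp : Frm P V
  | and : Frm P V → Frm P V → Frm P V
  | or : Frm P V → Frm P V → Frm P V
  | dia : RE P V → Frm P V → Frm P V
  | box : RE P V → Frm P V → Frm P V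
  | diaLe : RE P V → V → Frm P V → Frm P V
  | boxLe : RE P V → V → Frm P V → Frm P V
  | diaCp : RE P V → Frm P V → Frm P V
  | boxCp : RE P V → Frm P V → Frm P V
/-- Regular expressions with tests. -/
inductive RE (P V : Type) where
  | prop : PropF P → RE P V
  | test : Frm P V → RE P V
  | plus : RE P V → RE P V → RE P V
  | comp : RE P V → RE P V → RE P V
  | star : RE P V → RE P V
end

/-- `n` is a changepoint of the color sequence `c`. -/
def Changepoint (c : ℕ → Prop) (n : ℕ) : Prop :=
  n = 0 ∨ ¬ (c (n - 1) ↔ c n)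

/-- The infix at positions `n, …, n + j - 1` contains at most one changepoint. -/
def AtMostOneCP (c : ℕ → Prop) (n j : ℕ) : Prop :=
  ∀ m₁ m₂, n ≤ m₁ → m₁ < n + j → n ≤ m₂ → m₂ < n + j →
    Changepoint c m₁ → Changepoint c m₂ → m₁ = m₂

mutual
/-- Satisfaction `(w, n, α) ⊨ φ`; the color of position `n` (truth value of the
fresh proposition `p`) is `c n`. -/
def Sat {P V : Type} (w : ℕ → P → Prop) (c : ℕ → Prop) (α : V → ℕ) :
    Frm P V → ℕ → Prop
  | .pos p, n => w n p
  | .neg p, n => ¬ w n p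
  | .colp, n => c n
  | .colnp, n => ¬ c n
  | .and φ ψ, n => Sat w c α φ n ∧ Sat w c α ψ n
  | .or φ ψ, n => Sat w c α φ n ∨ Sat w c α ψ n
  | .dia r ψ, n => ∃ j, Match w c α r n (n + j) ∧ Sat w c α ψ (n + j)
  | .box r ψ, n => ∀ j, Match w c α r n (n + j) → Sat w c α ψ (n + j)
  | .diaLe r z ψ, n => ∃ j, j ≤ α z ∧ Match w c α r n (n + j) ∧ Sat w c α ψ (n + j)
  | .boxLe r z ψ, n => ∀ j, j ≤ α z → Match w c α r n (n + j) → Sat w c α ψ (n + j)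
  | .diaCp r ψ, n => ∃ j, Match w c α r n (n + j) ∧ AtMostOneCP c n j ∧ Sat w c α ψ (n + j)
  | .boxCp r ψ, n => ∀ j, Match w c α r n (n + j) → AtMostOneCP c n j → Sat w c α ψ (n + j)
/-- The match relation `R(r, w, α)`. -/
def Match {P V : Type} (w : ℕ → P → Prop) (c : ℕ → Prop) (α : V → ℕ) :
    RE P V → ℕ → ℕ → Prop
  | .prop φ, m, n => n = m + 1 ∧ φ.eval (w m)
  | .test ψ, m, n => n = m ∧ Sat w c α ψ m
  | .plus r₀ r₁, m, n => Match w c α r₀ m n ∨ Match w c α r₁ m n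
  | .comp r₀ r₁, m, n => ∃ k, Match w c α r₀ m k ∧ Match w c α r₁ k n
  | .star r, m, n => ∃ (k : ℕ) (f : ℕ → ℕ), f 0 = m ∧ f k = n ∧
      ∀ i, i < k → Match w c α r (f i) (f (i + 1))
end

variable {P V : Type}

mutual
/-- Size of a formula. -/
def Frm.size : Frm P V → ℕ
  | .pos _ => 1
  | .neg _ => 1
  | .colp => 1
  | .colnp => 1
  | .and φ ψ => 1 + φ.size + ψ.size
  | .or φ ψ => 1 + φ.size + ψ.size
  | .dia r ψ => 1 + r.size + ψ.size
  | .box r ψ => 1 + r.size + ψ.size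
  | .diaLe r _ ψ => 1 + r.size + ψ.size
  | .boxLe r _ ψ => 1 + r.size + ψ.size
  | .diaCp r ψ => 1 + r.size + ψ.size
  | .boxCp r ψ => 1 + r.size + ψ.size
/-- Size (length) of a regular expression. -/
def RE.size : RE P V → ℕ
  | .prop _ => 1
  | .test ψ => 1 + ψ.size
  | .plus r₀ r₁ => 1 + r₀.size + r₁.size
  | .comp r₀ r₁ => 1 + r₀.size + r₁.size
  | .star r => 1 + r.size
end

mutual
/-- Variables parameterizing diamond operators. -/
def Frm.dvars [DecidableEq V] : Frm P V → Finset V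
  | .pos _ => ∅
  | .neg _ => ∅
  | .colp => ∅
  | .colnp => ∅
  | .and φ ψ => φ.dvars ∪ ψ.dvars
  | .or φ ψ => φ.dvars ∪ ψ.dvars
  | .dia r ψ => r.dvars ∪ ψ.dvars
  | .box r ψ => r.dvars ∪ ψ.dvars
  | .diaLe r z ψ => insert z (r.dvars ∪ ψ.dvars)
  | .boxLe r _ ψ => r.dvars ∪ ψ.dvars
  | .diaCp r ψ => r.dvars ∪ ψ.dvars
  | .boxCp r ψ => r.dvars ∪ ψ.dvars
def RE.dvars [DecidableEq V] : RE P V → Finset V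
  | .prop _ => ∅
  | .test ψ => ψ.dvars
  | .plus r₀ r₁ => r₀.dvars ∪ r₁.dvars
  | .comp r₀ r₁ => r₀.dvars ∪ r₁.dvars
  | .star r => r.dvars
end

mutual
/-- Variables parameterizing box operators. -/
def Frm.bvars [DecidableEq V] : Frm P V → Finset V
  | .pos _ => ∅
  | .neg _ => ∅
  | .colp => ∅
  | .colnp => ∅
  | .and φ ψ => φ.bvars ∪ ψ.bvars
  | .or φ ψ => φ.bvars ∪ ψ.bvars
  | .dia r ψ => r.bvars ∪ ψ.bvars
  | .box r ψ => r.bvars ∪ ψ.bvars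
  | .diaLe r _ ψ => r.bvars ∪ ψ.bvars
  | .boxLe r z ψ => insert z (r.bvars ∪ ψ.bvars)
  | .diaCp r ψ => r.bvars ∪ ψ.bvars
  | .boxCp r ψ => r.bvars ∪ ψ.bvars
def RE.bvars [DecidableEq V] : RE P V → Finset V
  | .prop _ => ∅
  | .test ψ => ψ.bvars
  | .plus r₀ r₁ => r₀.bvars ∪ r₁.bvars
  | .comp r₀ r₁ => r₀.bvars ∪ r₁.bvars
  | .star r => r.bvars
end

mutual
/-- The formula contains no changepoint-bounded operators. -/
def Frm.noCp : Frm P V → Prop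
  | .pos _ => True
  | .neg _ => True
  | .colp => True
  | .colnp => True
  | .and φ ψ => φ.noCp ∧ ψ.noCp
  | .or φ ψ => φ.noCp ∧ ψ.noCp
  | .dia r ψ => r.noCp ∧ ψ.noCp
  | .box r ψ => r.noCp ∧ ψ.noCp
  | .diaLe r _ ψ => r.noCp ∧ ψ.noCp
  | .boxLe r _ ψ => r.noCp ∧ ψ.noCp
  | .diaCp _ _ => False
  | .boxCp _ _ => False
def RE.noCp : RE P V → Prop
  | .prop _ => True
  | .test ψ => ψ.noCp
  | .plus r₀ r₁ => r₀.noCp ∧ r₁.noCp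
  | .comp r₀ r₁ => r₀.noCp ∧ r₁.noCp
  | .star r => r.noCp
end

mutual
/-- The formula does not mention the fresh coloring proposition `p`. -/
def Frm.noCol : Frm P V → Prop
  | .pos _ => True
  | .neg _ => True
  | .colp => False
  | .colnp => False
  | .and φ ψ => φ.noCol ∧ ψ.noCol
  | .or φ ψ => φ.noCol ∧ ψ.noCol
  | .dia r ψ => r.noCol ∧ ψ.noCol
  | .box r ψ => r.noCol ∧ ψ.noCol
  | .diaLe r _ ψ => r.noCol ∧ ψ.noCol
  | .boxLe r _ ψ => r.noCol ∧ ψ.noCol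
  | .diaCp r ψ => r.noCol ∧ ψ.noCol
  | .boxCp r ψ => r.noCol ∧ ψ.noCol
def RE.noCol : RE P V → Prop
  | .prop _ => True
  | .test ψ => ψ.noCol
  | .plus r₀ r₁ => r₀.noCol ∧ r₁.noCol
  | .comp r₀ r₁ => r₀.noCol ∧ r₁.noCol
  | .star r => r.noCol
end

/-- A genuine PLDL formula: no changepoint-bounded operators and no
occurrence of the fresh proposition `p`. -/
def IsPLDL (φ : Frm P V) : Prop := φ.noCp ∧ φ.noCol

/-- Well-formedness: no variable parameterizes both a diamond and a box. -/
def WellFormed [DecidableEq V] (φ : Frm P V) : Prop :=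
  ∀ z, z ∈ φ.dvars → z ∉ φ.bvars

/-- Dualization: the negation of a formula, pushing negations to atoms. -/
def Frm.not : Frm P V → Frm P V
  | .pos p => .neg p
  | .neg p => .pos p
  | .colp => .colnp
  | .colnp => .colp
  | .and φ ψ => .or φ.not ψ.not
  | .or φ ψ => .and φ.not ψ.not
  | .dia r ψ => .box r ψ.not
  | .box r ψ => .dia r ψ.not
  | .diaLe r z ψ => .boxLe r z ψ.not
  | .boxLe r z ψ => .diaLe r z ψ.not
  | .diaCp r ψ => .boxCp r ψ.not
  | .boxCp r ψ => .diaCp r ψ.not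

mutual
/-- `rel φ`: replace every parameterized operator by the corresponding
changepoint-bounded operator. -/
def Frm.rel : Frm P V → Frm P V
  | .pos p => .pos p
  | .neg p => .neg p
  | .colp => .colp
  | .colnp => .colnp
  | .and φ ψ => .and φ.rel ψ.rel
  | .or φ ψ => .or φ.rel ψ.rel
  | .dia r ψ => .dia r.rel ψ.rel
  | .box r ψ => .box r.rel ψ.rel
  | .diaLe r _ ψ => .diaCp r.rel ψ.rel
  | .boxLe r _ ψ => .boxCp r.rel ψ.rel
  | .diaCp r ψ => .diaCp r.rel ψ.rel
  | .boxCp r ψ => .boxCp r.rel ψ.rel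
def RE.rel : RE P V → RE P V
  | .prop φ => .prop φ
  | .test ψ => .test ψ.rel
  | .plus r₀ r₁ => .plus r₀.rel r₁.rel
  | .comp r₀ r₁ => .comp r₀.rel r₁.rel
  | .star r => .star r.rel
end

/-- `θ_∞p = [tt*]⟨tt*⟩p`: the fresh proposition `p` holds infinitely often. -/
def thetaInfP : Frm P V := .box (.star (.prop .tru)) (.dia (.star (.prop .tru)) .colp)

/-- `θ_∞¬p`. -/
def thetaInfNP : Frm P V := .box (.star (.prop .tru)) (.dia (.star (.prop .tru)) .colnp)

/-- `c(φ) = rel(φ) ∧ θ_∞p ∧ θ_∞¬p`. -/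
def cFrm (φ : Frm P V) : Frm P V := .and φ.rel (.and thetaInfP thetaInfNP)

/-- `[i, j)` is a block of the coloring `c`: `i` and `j` are consecutive
changepoints. -/
def IsBlock (c : ℕ → Prop) (i j : ℕ) : Prop :=
  i < j ∧ Changepoint c i ∧ Changepoint c j ∧
    ∀ m, i < m → m < j → ¬ Changepoint c m

/-- Infinitely many changepoints. -/
def InfCP (c : ℕ → Prop) : Prop := ∀ N, ∃ n, N < n ∧ Changepoint c n

/-- Every block has length at most `k` (and there are infinitely many
changepoints). -/
def kBounded (c : ℕ → Prop) (k : ℕ) : Prop :=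
  InfCP c ∧ ∀ i j, IsBlock c i j → j - i ≤ k

/-- Infinitely many changepoints and every block has length at least `k`. -/
def kSpaced (c : ℕ → Prop) (k : ℕ) : Prop :=
  InfCP c ∧ ∀ i j, IsBlock c i j → k ≤ j - i

/-- A transducer implementing a finite-state strategy of Player O: it reads
inputs in `2^I` and outputs subsets of `O ∪ {p}` (the `O`-part `outO` and the
fresh proposition `p` via `outP`). -/
structure Transducer (Q I O : Type) where
  init : Q
  trans : Q → (I → Prop) → Q
  outO : Q → (O → Prop)
  outP : Q → Prop

/-- The state after reading `i₀ ⋯ i_n`. -/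
def Transducer.run {Q I O : Type} (T : Transducer Q I O)
    (i : ℕ → I → Prop) : ℕ → Q
  | 0 => T.trans T.init (i 0)
  | n + 1 => T.trans (T.run i n) (i (n + 1))

/-- The outcome word (over `2^(I ∪ O)`) consistent with the strategy
implemented by `T` against input sequence `i`. -/
def Transducer.word {Q I O : Type} (T : Transducer Q I O)
    (i : ℕ → I → Prop) (n : ℕ) : (I ⊕ O) → Prop :=
  fun a => a.elim (i n) (T.outO (T.run i n))

/-- The `p`-coloring of the outcome. -/
def Transducer.color {Q I O : Type} (T : Transducer Q I O)
    (i : ℕ → I → Prop) (n : ℕ) : Prop :=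
  T.outP (T.run i n)

lemma matchStarTru {P V : Type} (w : ℕ → P → Prop) (c : ℕ → Prop) (α : V → ℕ)
    (m j : ℕ) : Match w c α (RE.star (RE.prop PropF.tru)) m (m + j) := by
  refine ⟨j, fun t => m + t, rfl, rfl, ?_⟩
  intro t ht
  exact ⟨rfl, trivial⟩

lemma exists_cp_of_ne (c : ℕ → Prop) :
    ∀ d x, ¬ (c x ↔ c (x + d)) → ∃ n, x < n ∧ n ≤ x + d ∧ Changepoint c n := by
  intro d
  induction d with
  | zero => intro x h; exact absurd Iff.rfl h
  | succ d ih =>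
    intro x h
    by_cases hlast : c (x + d) ↔ c (x + d + 1)
    · have hx : ¬ (c x ↔ c (x + d)) := fun hxy => h (hxy.trans hlast)
      obtain ⟨n, h1, h2, h3⟩ := ih x hx
      exact ⟨n, h1, h2.trans (Nat.le_succ _), h3⟩
    · refine ⟨x + d + 1, by omega, le_refl _, Or.inr ?_⟩
      simpa using hlast

lemma infCP_of (c : ℕ → Prop) (h1 : ∀ n, ∃ m, c (n + m))
    (h2 : ∀ n, ∃ m, ¬ c (n + m)) : InfCP c := by
  intro N
  obtain ⟨m, hm⟩ := h1 (N + 1)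
  obtain ⟨m', hm'⟩ := h2 (N + 1 + m)
  have hne : ¬ (c (N + 1 + m) ↔ c (N + 1 + m + m')) := by tauto
  obtain ⟨n, h1', _, h3⟩ := exists_cp_of_ne c m' (N + 1 + m) hne
  exact ⟨n, by omega, h3⟩

lemma sat_theta_infCP {P V : Type} (w : ℕ → P → Prop) (c : ℕ → Prop) (α : V → ℕ)
    (h1 : Sat w c α thetaInfP 0) (h2 : Sat w c α thetaInfNP 0) : InfCP c := by
  simp only [thetaInfP, thetaInfNP, Sat] at h1 h2
  refine infCP_of c ?_ ?_
  · intro n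
    obtain ⟨j, _, hj⟩ := h1 n (by simpa using matchStarTru w c α 0 n)
    exact ⟨j, by simpa [Sat] using hj⟩
  · intro n
    obtain ⟨j, _, hj⟩ := h2 n (by simpa using matchStarTru w c α 0 n)
    exact ⟨j, by simpa [Sat] using hj⟩

lemma sat_cFrm_theta {P V : Type} (w : ℕ → P → Prop) (c : ℕ → Prop) (α : V → ℕ)
    (φ : Frm P V) (h : Sat w c α (cFrm φ) 0) : InfCP c := by
  simp only [cFrm, Sat] at h
  exact sat_theta_infCP w c α h.2.1 h.2.2

/-- if a finite-state strategy with `n` states realizes `c(φ)`,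
then every consistent outcome is `(n+1)`-bounded. -/
theorem finite_state_bounded {Q I O V : Type} [Fintype Q] [DecidableEq V]
    (T : Transducer Q I O) (φ : Frm (I ⊕ O) V)
    (hφ : IsPLDL φ) (hd : φ.bvars = ∅)
    (hreal : ∀ i : ℕ → I → Prop,
      Sat (T.word i) (T.color i) (fun _ => 0) (cFrm φ) 0) :
    ∀ i : ℕ → I → Prop, kBounded (T.color i) (Fintype.card Q + 1) := by
  intro i
  have hinf : InfCP (T.color i) := sat_cFrm_theta _ _ _ φ (hreal i)
  refine ⟨hinf, ?_⟩
  intro a b hblock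
  by_contra hlong
  obtain ⟨hab, hcpa, hcpb, hnocp⟩ := hblock
  have hb : a + Fintype.card Q + 2 ≤ b := by omega
  set c := T.color i with hc
  -- the color is constant on [a, b-1]
  have hconst : ∀ t, a + t < b → (c (a + t) ↔ c a) := by
    intro t
    induction t with
    | zero => intro _; rfl
    | succ t ih =>
      intro ht
      have hncp := hnocp (a + t + 1) (by omega) (by omega)
      have : c (a + t) ↔ c (a + t + 1) := by
        by_contra hne
        exact hncp (Or.inr (by simpa using hne))
      exact this.symm.trans (ih (by omega))
  -- pigeonhole: two positions in [a, a + card Q] with the same state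
  have hcard : Fintype.card Q < Fintype.card (Fin (Fintype.card Q + 1)) := by
    simp
  obtain ⟨k1, k2, hk12, hkeq⟩ :=
    Fintype.exists_ne_map_eq_of_card_lt (fun k : Fin (Fintype.card Q + 1) =>
      T.run i (a + k)) hcard
  wlog hlt : (k1 : ℕ) < (k2 : ℕ) generalizing k1 k2
  · exact this k2 k1 hk12.symm hkeq.symm
      (by rcases Nat.lt_or_ge (k1 : ℕ) (k2 : ℕ) with h | h
          · exact absurd h hlt
          · have : (k2 : ℕ) ≠ (k1 : ℕ) := fun h' => hk12 (Fin.ext h'.symm)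
            omega)
  set m1 := a + (k1 : ℕ) with hm1
  set m2 := a + (k2 : ℕ) with hm2
  have hm12 : m1 < m2 := by omega
  set d := m2 - m1 with hdd
  have hd0 : 0 < d := by omega
  have hm2d : m2 = m1 + d := by omega
  have hrun12 : T.run i m1 = T.run i m2 := hkeq
  have hm2b : m2 + 1 ≤ b := by
    have := k2.isLt
    omega
  -- the pumped input
  set f : ℕ → ℕ := fun n => if n ≤ m1 then n else m1 + 1 + ((n - m1 - 1) % d)
    with hf
  set i' : ℕ → I → Prop := fun n => i (f n) with hi'
  have hf0 : f 0 = 0 := by simp [hf]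
  have hrange : ∀ n, m1 < n → m1 + 1 ≤ f n ∧ f n ≤ m2 := by
    intro n hn
    have : ¬ n ≤ m1 := by omega
    simp only [hf, this, if_false]
    have := Nat.mod_lt (n - m1 - 1) hd0
    omega
  have hstep : ∀ n, T.run i (f (n + 1)) = T.trans (T.run i (f n)) (i (f (n + 1))) := by
    intro n
    by_cases h1 : n + 1 ≤ m1
    · have hfn : f n = n := by simp [hf]; omega
      have hfn1 : f (n + 1) = n + 1 := by simp [hf, h1]
      rw [hfn, hfn1]; rfl
    · by_cases h2 : n ≤ m1
      · -- n = m1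
        have hn : n = m1 := by omega
        have hfn : f n = m1 := by simp [hf, h2, hn]
        have hfn1 : f (n + 1) = m1 + 1 := by
          simp only [hf, h1, if_false]
          have : n + 1 - m1 - 1 = 0 := by omega
          simp [this]
        rw [hfn, hfn1]; rfl
      · -- n > m1
        have hnm : ¬ n ≤ m1 := h2
        set r := (n - m1 - 1) % d with hr
        have hrd : r < d := Nat.mod_lt _ hd0
        have hfn : f n = m1 + 1 + r := by simp [hf, hnm, hr]
        have hsucc : (n + 1) - m1 - 1 = (n - m1 - 1) + 1 := by omega
        by_cases hrlast : r + 1 = d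
        · have hmod : ((n - m1 - 1) + 1) % d = 0 := by
            rw [Nat.add_mod, ← hr]
            simp [hrlast]
          have hfn1 : f (n + 1) = m1 + 1 := by
            simp only [hf, h1, if_false, hsucc, hmod]
          rw [hfn, hfn1]
          have : m1 + 1 + r = m2 := by omega
          rw [this, ← hrun12]
          rfl
        · have hmod : ((n - m1 - 1) + 1) % d = r + 1 := by
            rw [Nat.add_mod, ← hr]
            have : (r + 1 % d) = r + 1 := by
              congr 1
              exact Nat.mod_eq_of_lt (by omega)
            rw [Nat.mod_eq_of_lt]
            · omega
            · have : 1 % d ≤ 1 := Nat.mod_le 1 d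
              omega
          have hfn1 : f (n + 1) = m1 + 1 + (r + 1) := by
            simp only [hf, h1, if_false, hsucc, hmod]
          rw [hfn, hfn1]
          have : m1 + 1 + (r + 1) = (m1 + 1 + r) + 1 := by omega
          rw [this]
          rfl
  have hruneq : ∀ n, T.run i' n = T.run i (f n) := by
    intro n
    induction n with
    | zero =>
      show T.trans T.init (i' 0) = T.run i (f 0)
      rw [hf0]
      simp only [hi', hf0]
      rfl
    | succ n ih =>
      show T.trans (T.run i' n) (i' (n + 1)) = T.run i (f (n + 1))
      rw [ih, hstep n]
  -- color of i' is eventually constant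
  have hconst' : ∀ n, m1 + 1 ≤ n → (T.color i' n ↔ c a) := by
    intro n hn
    have hr := hrange n (by omega)
    have : T.color i' n = c (f n) := by
      simp only [Transducer.color, hruneq, hc]
    rw [this]
    have : f n = a + (f n - a) := by omega
    rw [this]
    exact hconst (f n - a) (by omega)
  -- but hreal i' forces infinitely many changepoints
  have hinf' : InfCP (T.color i') := sat_cFrm_theta _ _ _ φ (hreal i')
  obtain ⟨n, hn1, hn2⟩ := hinf' (m1 + 1)
  rcases hn2 with h0 | hne
  · omega
  · apply hne
    have e1 := hconst' (n - 1) (by omega)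
    have e2 := hconst' n (by omega)
    exact e1.trans e2.symm

end PLDLPaper
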